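/- Let n ∈ ℕ with n ≥ 5, and let v* be the largest natural number v such that v·2^v < 2^{n-3} (equivalently, v* = ⌈W₀(2^{n-3}·ln 2)/ln 2 − 1⌉, where W₀ is the principal branch of the Lambert W function). Assume v* ≤ 253. Then the integer 2^{v*} + 1 is not representable as an n-bit takum: there exists no bit string M of length n with τ(M) = 2^{v*} + 1. Hence 2^{v*} is the largest consecutive integer representable by n-bit takums. -/

import Mathlib

/-- Integer value of a bit string read MSB → LSB. -/
def bitsToNat (L : List Bool) : ℕ :=
  L.foldl (fun a b => 2 * a + (if b then 1 else 0)) 0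

/-- The (linear) takum decoding function `τ`. A bit string (MSB → LSB, padded on the
right with zero "ghost bits" as needed) consists of a sign bit `S`, a direction bit `D`,
three regime bits `R` with regime `r = int(R)` if `D = 1` and `r = 7 - int(R)` if
`D = 0`, `r` characteristic bits `C` with characteristic `c = 2^r - 1 + int(C)` if
`D = 1` and `c = -2^(r+1) + 1 + int(C)` if `D = 0`, and fraction bits `F` with fraction
`f = int(F)/2^p ∈ [0,1)`. The all-zeros string encodes `0` (`some 0`), `10…0` encodes
NaR (`none`), and every other string encodes `((1 - 3S) + f) · 2^e` with exponent
`e = (-1)^S (c + S)`. -/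
def takumVal : List Bool → Option ℚ
  | [] => some 0
  | S :: rest =>
    if rest.all (fun b => b == false) then
      if S then none else some 0
    else
      let D : Bool := rest.getD 0 false
      let rawR : ℕ := bitsToNat [rest.getD 1 false, rest.getD 2 false, rest.getD 3 false]
      let r : ℕ := if D then rawR else 7 - rawR
      let C : List Bool := (rest.drop 4).take r
      let Cpad : List Bool := C ++ List.replicate (r - C.length) false
      let c : ℤ := if D then 2 ^ r - 1 + (bitsToNat Cpad : ℤ)
                   else -(2 ^ (r + 1)) + 1 + (bitsToNat Cpad : ℤ)
      let F : List Bool := rest.drop (4 + r)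
      let f : ℚ := (bitsToNat F : ℚ) / 2 ^ F.length
      let s : ℤ := if S then 1 else 0
      let e : ℤ := (if S then -1 else 1) * (c + s)
      some (((1 - 3 * (s : ℚ)) + f) * 2 ^ e)


lemma bitsToNat_aux (L : List Bool) (a : ℕ) :
    L.foldl (fun a b => 2 * a + (if b then 1 else 0)) a = a * 2 ^ L.length + bitsToNat L := by
  induction L generalizing a with
  | nil => simp [bitsToNat]
  | cons b L ih =>
    simp only [List.foldl_cons, List.length_cons, bitsToNat]
    rw [ih, ih (2 * 0 + (if b then 1 else 0))]
    ring

lemma bitsToNat_cons (b : Bool) (L : List Bool) :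
    bitsToNat (b :: L) = (if b then 1 else 0) * 2 ^ L.length + bitsToNat L := by
  simp only [bitsToNat, List.foldl_cons]
  rw [bitsToNat_aux, bitsToNat]
  ring_nf

lemma bitsToNat_append (L1 L2 : List Bool) :
    bitsToNat (L1 ++ L2) = bitsToNat L1 * 2 ^ L2.length + bitsToNat L2 := by
  simp only [bitsToNat, List.foldl_append]
  rw [bitsToNat_aux]
  rfl

lemma bitsToNat_lt (L : List Bool) : bitsToNat L < 2 ^ L.length := by
  induction L with
  | nil => simp [bitsToNat]
  | cons b L ih =>
    rw [bitsToNat_cons]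
    have : (if b then 1 else 0) ≤ 1 := by split <;> omega
    calc (if b then 1 else 0) * 2 ^ L.length + bitsToNat L
        ≤ 1 * 2 ^ L.length + bitsToNat L := by
          exact Nat.add_le_add_right (Nat.mul_le_mul_right _ this) _
      _ < 2 ^ (L.length + 1) := by rw [pow_succ]; omega

lemma bitsToNat_all_false (L : List Bool) (h : L.all (fun b => b == false) = true) :
    bitsToNat L = 0 := by
  induction L with
  | nil => rfl
  | cons b L ih =>
    simp only [List.all_cons, Bool.and_eq_true, beq_iff_eq] at h
    rw [bitsToNat_cons, h.1, ih h.2]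
    simp

lemma not_all_false (L : List Bool) (h : bitsToNat L ≠ 0) :
    L.all (fun b => b == false) = false := by
  by_contra hc
  exact h (bitsToNat_all_false L (by simpa using hc))

def natToBits : ℕ → ℕ → List Bool
  | 0, _ => []
  | (len+1), x => natToBits len (x / 2) ++ [decide (x % 2 = 1)]

lemma length_natToBits (len x : ℕ) : (natToBits len x).length = len := by
  induction len generalizing x with
  | zero => rfl
  | succ len ih => simp [natToBits, ih]

lemma bitsToNat_natToBits (len x : ℕ) (h : x < 2 ^ len) :
    bitsToNat (natToBits len x) = x := by
  induction len generalizing x with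
  | zero => interval_cases x; rfl
  | succ len ih =>
    rw [natToBits, bitsToNat_append, ih (x / 2) (by rw [pow_succ] at h; omega)]
    have hb : bitsToNat [decide (x % 2 = 1)] = x % 2 := by
        rcases Nat.mod_two_eq_zero_or_one x with h2 | h2 <;> simp [h2, bitsToNat]
    rw [hb]
    simp only [List.length_singleton]
    omega

lemma takumVal_cons5 (S D x y z : Bool) (tail : List Bool)
    (hne : (D :: x :: y :: z :: tail).all (fun b => b == false) = false)
    (r : ℕ) (hr : (if D then bitsToNat [x, y, z] else 7 - bitsToNat [x, y, z]) = r)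
    (c : ℤ)
    (hc : c = if D then 2 ^ r - 1 + (bitsToNat ((tail.take r) ++ List.replicate (r - (tail.take r).length) false) : ℤ)
              else -(2 ^ (r + 1)) + 1 + (bitsToNat ((tail.take r) ++ List.replicate (r - (tail.take r).length) false) : ℤ))
    (s : ℤ) (hs : s = if S then 1 else 0)
    (e : ℤ) (he : e = (if S then -1 else 1) * (c + s)) :
    takumVal (S :: D :: x :: y :: z :: tail) =
      some (((1 - 3 * (s : ℚ)) + (bitsToNat (tail.drop r) : ℚ) / 2 ^ (tail.drop r).length) * 2 ^ e) := by
  rw [takumVal]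
  rw [hne]
  simp only [Bool.false_eq_true, if_false]
  have hgetD0 : (D :: x :: y :: z :: tail).getD 0 false = D := rfl
  have hgetD1 : (D :: x :: y :: z :: tail).getD 1 false = x := rfl
  have hgetD2 : (D :: x :: y :: z :: tail).getD 2 false = y := rfl
  have hgetD3 : (D :: x :: y :: z :: tail).getD 3 false = z := rfl
  have hdrop4 : (D :: x :: y :: z :: tail).drop 4 = tail := rfl
  have hdrop4r : (D :: x :: y :: z :: tail).drop (4 + r) = tail.drop r := by
    have h := List.drop_drop (i := r) (j := 4) (l := D :: x :: y :: z :: tail)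
    rw [← h]
    rfl
  rw [hgetD0, hgetD1, hgetD2, hgetD3, hdrop4, hr, hdrop4r, ← hc, ← hs, ← he]

lemma repr_pos (n k a : ℕ) (hn : 5 ≤ n) (hk : k + 1 < 2 ^ 8)
    (hrn : Nat.log 2 (k + 1) + 5 ≤ n) (ha : a < 2 ^ (n - 5 - Nat.log 2 (k + 1))) :
    ∃ M : List Bool, M.length = n ∧
      takumVal M = some ((1 + (a : ℚ) / 2 ^ (n - 5 - Nat.log 2 (k + 1))) * 2 ^ k) := by
  set r := Nat.log 2 (k + 1) with hrdef
  set p := n - 5 - r with hpdef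
  have h2r : 2 ^ r ≤ k + 1 := Nat.pow_log_le_self 2 (by omega)
  have h2r' : k + 1 < 2 ^ (r + 1) := Nat.lt_pow_succ_log_self one_lt_two _
  obtain ⟨x, y, z, hR⟩ : ∃ x y z, natToBits 3 r = [x, y, z] :=
    List.length_eq_three.mp (length_natToBits 3 r)
  have hr8 : r < 8 := by
    by_contra h
    have : (2:ℕ) ^ 8 ≤ 2 ^ r := Nat.pow_le_pow_right (by norm_num) (by omega)
    omega
  have hRval : bitsToNat [x, y, z] = r := by
    rw [← hR]; exact bitsToNat_natToBits 3 r (by norm_num; omega)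
  set C := natToBits r (k + 1 - 2 ^ r) with hCdef
  set F := natToBits p a with hFdef
  have hC : C.length = r := length_natToBits _ _
  have hF : F.length = p := length_natToBits _ _
  have hCval : bitsToNat C = k + 1 - 2 ^ r := by
    apply bitsToNat_natToBits
    have : (2:ℕ) ^ (r+1) = 2 * 2 ^ r := by ring
    omega
  have hFval : bitsToNat F = a := bitsToNat_natToBits _ _ ha
  have htake : (C ++ F).take r = C := by rw [← hC]; exact List.take_left
  have hdrop : (C ++ F).drop r = F := by rw [← hC]; exact List.drop_left
  refine ⟨false :: true :: x :: y :: z :: (C ++ F), ?_, ?_⟩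
  · simp [hC, hF]; omega
  · rw [takumVal_cons5 false true x y z (C ++ F) (by simp) r (by simpa using hRval)
      (k : ℤ) ?_ 0 (by simp) (k : ℤ) (by simp)]
    · rw [hdrop, hFval, hF]
      norm_num [zpow_natCast]
    · rw [htake, hC]
      simp only [Nat.sub_self, List.replicate_zero, List.append_nil, hCval, if_true]
      have : ((k + 1 - 2 ^ r : ℕ) : ℤ) = (k : ℤ) + 1 - 2 ^ r := by
        push_cast [h2r]; ring
      rw [this]; ring

lemma repr_neg (n e a : ℕ) (hn : 5 ≤ n) (he252 : e ≤ 252)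
    (hrn : Nat.log 2 (e + 1) + 5 ≤ n) (ha : a < 2 ^ (n - 5 - Nat.log 2 (e + 1))) :
    ∃ M : List Bool, M.length = n ∧
      takumVal M = some (((-2 : ℚ) + (a : ℚ) / 2 ^ (n - 5 - Nat.log 2 (e + 1))) * 2 ^ e) := by
  set r := Nat.log 2 (e + 1) with hrdef
  set p := n - 5 - r with hpdef
  have h2r : 2 ^ r ≤ e + 1 := Nat.pow_log_le_self 2 (by omega)
  have h2r' : e + 1 < 2 ^ (r + 1) := Nat.lt_pow_succ_log_self one_lt_two _
  have hr7 : r ≤ 7 := by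
    by_contra h
    have : (2:ℕ) ^ 8 ≤ 2 ^ r := Nat.pow_le_pow_right (by norm_num) (by omega)
    omega
  obtain ⟨x, y, z, hR⟩ : ∃ x y z, natToBits 3 (7 - r) = [x, y, z] :=
    List.length_eq_three.mp (length_natToBits 3 (7 - r))
  have hRval : bitsToNat [x, y, z] = 7 - r := by
    rw [← hR]; exact bitsToNat_natToBits 3 (7 - r) (by norm_num; omega)
  have h2rr : (2:ℕ) ^ (r + 1) = 2 * 2 ^ r := by ring
  set xC := 2 ^ (r + 1) - 2 - e with hxCdef
  set C := natToBits r xC with hCdef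
  set F := natToBits p a with hFdef
  have hC : C.length = r := length_natToBits _ _
  have hF : F.length = p := length_natToBits _ _
  have hCval : bitsToNat C = xC := by
    apply bitsToNat_natToBits
    omega
  have hFval : bitsToNat F = a := bitsToNat_natToBits _ _ ha
  have htake : (C ++ F).take r = C := by rw [← hC]; exact List.take_left
  have hdrop : (C ++ F).drop r = F := by rw [← hC]; exact List.drop_left
  have hne : (false :: x :: y :: z :: (C ++ F)).all (fun b => b == false) = false := by
    by_contra hcc
    rw [Bool.not_eq_false] at hcc
    simp only [List.all_cons, List.all_append, Bool.and_eq_true, beq_iff_eq] at hcc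
    obtain ⟨-, hx, hy, hz, hCall, -⟩ := hcc
    have h1 : bitsToNat [x, y, z] = 0 := by
      rw [hx, hy, hz]; rfl
    have h2 : bitsToNat C = 0 := bitsToNat_all_false C hCall
    rw [hRval] at h1
    rw [hCval] at h2
    rcases Nat.lt_or_ge r 7 with h | h
    · omega
    · have hr7' : r = 7 := by omega
      rw [hxCdef] at h2
      have h256 : (2:ℕ) ^ (r + 1) = 256 := by rw [hr7']; norm_num
      omega
  refine ⟨true :: false :: x :: y :: z :: (C ++ F), ?_, ?_⟩
  · simp [hC, hF]; omega
  · rw [takumVal_cons5 true false x y z (C ++ F) hne r (by simp [hRval]; omega)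
      (-(1 + e) : ℤ) ?_ 1 (by simp) (e : ℤ) (by norm_num)]
    · rw [hdrop, hFval, hF]
      norm_num [zpow_natCast]
    · rw [htake, hC]
      simp only [Nat.sub_self, List.replicate_zero, List.append_nil, hCval, if_false]
      rw [hxCdef]
      have h1 : ((2 ^ (r + 1) - 2 - e : ℕ) : ℤ) = ((2 ^ (r + 1) : ℕ) : ℤ) - 2 - (e : ℤ) := by
        have : 2 + e ≤ 2 ^ (r + 1) := by omega
        omega
      rw [h1]
      push_cast
      ring

lemma repr_neg_one (n : ℕ) (hn : 5 ≤ n) :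
    ∃ M : List Bool, M.length = n ∧ takumVal M = some (-1 : ℚ) := by
  set F := List.replicate (n - 5) false with hFdef
  have hFall : F.all (fun b => b == false) = true := by
    simp [hFdef, List.all_eq_true]
  have hFval : bitsToNat F = 0 := bitsToNat_all_false F hFall
  refine ⟨true :: true :: false :: false :: false :: F, ?_, ?_⟩
  · simp [hFdef]; omega
  · rw [takumVal_cons5 true true false false false F (by simp) 0 (by rfl)
      0 (by simp [bitsToNat]) 1 (by simp) (-1 : ℤ) (by norm_num)]
    simp only [List.drop_zero, hFval]
    norm_num

lemma repr_zero (n : ℕ) (hn : 1 ≤ n) :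
    takumVal (List.replicate n false) = some 0 := by
  obtain ⟨m, rfl⟩ : ∃ m, n = m + 1 := ⟨n - 1, by omega⟩
  rw [List.replicate_succ, takumVal]
  simp [List.all_eq_true]

lemma not_repr (n v : ℕ) (hn : 5 ≤ n) (hv1 : 1 ≤ v)
    (hub : n ≤ v + Nat.log 2 (v + 1) + 4) :
    ¬ ∃ M : List Bool, M.length = n ∧ takumVal M = some (((2 ^ v + 1 : ℤ) : ℚ)) := by
  rintro ⟨M, hlen, hval⟩
  set q : ℚ := ((2 ^ v + 1 : ℤ) : ℚ) with hqdef
  have hq : q = 2 ^ v + 1 := by rw [hqdef]; push_cast; ring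
  have hq1 : (1 : ℚ) < q := by
    rw [hq]
    have : (0:ℚ) < 2 ^ v := by positivity
    linarith
  obtain ⟨S, D, x, y, z, tail, rfl⟩ :
      ∃ S D x y z tail, M = S :: D :: x :: y :: z :: tail := by
    rcases M with _ | ⟨S, _ | ⟨D, _ | ⟨x, _ | ⟨y, _ | ⟨z, tail⟩⟩⟩⟩⟩ <;>
      first
        | (exfalso; simp at hlen; omega)
        | exact ⟨_, _, _, _, _, _, rfl⟩
  rcases hall : (D :: x :: y :: z :: tail).all (fun b => b == false) with _ | _
  · -- not all false : main branch
    set r : ℕ := if D then bitsToNat [x, y, z] else 7 - bitsToNat [x, y, z] with hrdef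
    set Cpad : List Bool :=
      (tail.take r) ++ List.replicate (r - (tail.take r).length) false with hCpaddef
    set c : ℤ := if D then 2 ^ r - 1 + (bitsToNat Cpad : ℤ)
                 else -(2 ^ (r + 1)) + 1 + (bitsToNat Cpad : ℤ) with hcdef
    set s : ℤ := if S then 1 else 0 with hsdef
    set e : ℤ := (if S then -1 else 1) * (c + s) with hedef
    rw [takumVal_cons5 S D x y z tail hall r rfl c (by rw [hcdef]) s rfl e rfl] at hval
    set F : List Bool := tail.drop r with hFdef
    set p : ℕ := F.length with hpdef
    set aF : ℕ := bitsToNat F with haFdef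
    have heq : ((1 - 3 * (s : ℚ)) + (aF : ℚ) / 2 ^ p) * 2 ^ e = q := by
      exact Option.some.inj hval
    have hf0 : (0 : ℚ) ≤ (aF : ℚ) / 2 ^ p := by positivity
    have hf1 : (aF : ℚ) / 2 ^ p < 1 := by
      rw [div_lt_one (by positivity)]
      exact_mod_cast bitsToNat_lt F
    have h2epos : (0:ℚ) < 2 ^ e := zpow_pos (by norm_num) e
    -- sign must be false
    rcases S with _ | _
    · -- S = false
      simp only [if_false, Bool.false_eq_true] at hsdef hedef
      have hs0 : s = 0 := hsdef
      have he : e = c := by rw [hedef, hs0]; ring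
      have hCpadlen : Cpad.length = r := by
        rw [hCpaddef]
        simp only [List.length_append, List.length_replicate, List.length_take]
        omega
      have hxC : bitsToNat Cpad < 2 ^ r := by
        have := bitsToNat_lt Cpad
        rwa [hCpadlen] at this
      rcases D with _ | _
      · -- D = false : c ≤ -1, value < 1
        exfalso
        simp only [if_false, Bool.false_eq_true] at hcdef
        have hcneg : c ≤ -1 := by
          rw [hcdef]
          have h1 : (bitsToNat Cpad : ℤ) < 2 ^ r := by exact_mod_cast hxC
          have h2 : (2:ℤ) ^ (r + 1) = 2 * 2 ^ r := by ring
          have h3 : (0:ℤ) < 2 ^ r := by positivity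
          omega
        have hle : (2:ℚ) ^ e ≤ 2 ^ (-1 : ℤ) := by
          rw [he]
          exact zpow_le_zpow_right₀ (by norm_num) hcneg
        have : ((1 - 3 * (s:ℚ)) + (aF : ℚ) / 2 ^ p) * 2 ^ e < 2 * 2 ^ (-1 : ℤ) := by
          have hlt2 : (1 - 3 * (s:ℚ)) + (aF : ℚ) / 2 ^ p < 2 := by
            rw [hs0]; push_cast; linarith
          have hpos : (0:ℚ) < (1 - 3 * (s:ℚ)) + (aF : ℚ) / 2 ^ p ∨ True := Or.inr trivial
          calc ((1 - 3 * (s:ℚ)) + (aF : ℚ) / 2 ^ p) * 2 ^ e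
              ≤ ((1 - 3 * (s:ℚ)) + (aF : ℚ) / 2 ^ p) * 2 ^ (-1:ℤ) := by
                apply mul_le_mul_of_nonneg_left hle
                rw [hs0]; push_cast; linarith
            _ < 2 * 2 ^ (-1:ℤ) := by
                apply mul_lt_mul_of_pos_right hlt2 (zpow_pos (by norm_num) _)
        rw [heq] at this
        norm_num at this
        linarith
      · -- D = true : c = 2^r - 1 + xC ≥ 0
        simp only [if_true] at hcdef
        have h3 : (0:ℤ) < 2 ^ r := by positivity
        have hxCz : (0:ℤ) ≤ (bitsToNat Cpad : ℤ) := by positivity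
        have hxCz' : (bitsToNat Cpad : ℤ) < 2 ^ r := by exact_mod_cast hxC
        have h2v : (1:ℚ) < 2 ^ v := by
          have : (2:ℚ) ^ 0 < 2 ^ v := by
            apply pow_lt_pow_right₀ (by norm_num) (by omega)
          simpa using this
        have hcv : c = (v : ℤ) := by
          by_contra hne'
          rcases lt_or_gt_of_ne hne' with hlt | hgt
          · -- c < v : value < 2^(c+1) ≤ 2^v < q
            have hc1 : c + 1 ≤ (v : ℤ) := by omega
            have hv1' : ((1:ℚ) + (aF:ℚ)/2^p) * 2 ^ e < 2 ^ (c + 1) := by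
              rw [he, zpow_add_one₀ (by norm_num : (2:ℚ) ≠ 0)]
              have : (1 + (aF:ℚ)/2^p) < 2 := by linarith
              have h2c : (0:ℚ) < 2 ^ c := zpow_pos (by norm_num) c
              nlinarith
            have hv2' : (2:ℚ) ^ (c+1) ≤ 2 ^ ((v:ℕ) : ℤ) :=
              zpow_le_zpow_right₀ (by norm_num) hc1
            rw [zpow_natCast] at hv2'
            rw [hs0] at heq
            push_cast at heq
            rw [hq] at heq
            linarith
          · -- c > v : value ≥ 2^c ≥ 2^(v+1) > q
            have hc1 : ((v:ℤ) + 1) ≤ c := by omega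
            have hv2' : (2:ℚ) ^ ((v:ℤ) + 1) ≤ 2 ^ c :=
              zpow_le_zpow_right₀ (by norm_num) hc1
            have hv1' : (2:ℚ) ^ c ≤ ((1:ℚ) + (aF:ℚ)/2^p) * 2 ^ e := by
              rw [he]
              have h2c : (0:ℚ) < 2 ^ c := zpow_pos (by norm_num) c
              nlinarith
            have hcast : (2:ℚ) ^ ((v:ℤ) + 1) = 2 * 2 ^ v := by
              rw [zpow_add_one₀ (by norm_num : (2:ℚ) ≠ 0), zpow_natCast]
              ring
            rw [hs0] at heq
            push_cast at heq
            rw [hq] at heq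
            rw [hcast] at hv2'
            linarith
        -- now r ≥ log 2 (v+1)
        have hvr : v + 1 < 2 ^ (r + 1) := by
          have h2 : ((v:ℤ)) = 2 ^ r - 1 + (bitsToNat Cpad : ℤ) := by rw [← hcdef, hcv]
          have h4 : ((v:ℤ)) + 1 < 2 ^ r + 2 ^ r := by omega
          have h5 : ((v:ℤ)) + 1 < 2 ^ (r + 1) := by
            have : (2:ℤ) ^ (r+1) = 2 ^ r + 2 ^ r := by ring
            omega
          exact_mod_cast h5
        have hrv : Nat.log 2 (v + 1) ≤ r := by
          have := Nat.log_lt_of_lt_pow (show v + 1 ≠ 0 by omega) hvr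
          omega
        have htl : tail.length = n - 5 := by
          simp only [List.length_cons] at hlen
          omega
        have hplt : p < v := by
          have hp' : p = tail.length - r := by
            rw [hpdef, hFdef, List.length_drop]
          omega
        -- final contradiction
        exfalso
        rw [hs0, he, hcv, zpow_natCast] at heq
        push_cast at heq
        rw [hq] at heq
        have h2p : (0:ℚ) < 2 ^ p := by positivity
        have h2vq : (0:ℚ) < 2 ^ v := by positivity
        have hqq : (aF : ℚ) * 2 ^ v = 2 ^ p := by
          field_simp at heq
          nlinarith [heq]
        have hnat : aF * 2 ^ v = 2 ^ p := by exact_mod_cast hqq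
        rcases Nat.eq_zero_or_pos aF with h0 | h0
        · rw [h0] at hnat
          simp at hnat
          have hp2 : 0 < 2 ^ p := by positivity
          omega
        · have : 2 ^ v ≤ 2 ^ p := by
            calc 2 ^ v ≤ aF * 2 ^ v := Nat.le_mul_of_pos_left _ h0
              _ = 2 ^ p := hnat
          have := (Nat.pow_le_pow_iff_right one_lt_two).mp this
          omega
    · -- S = true : value negative
      exfalso
      simp only [if_true] at hsdef
      have hneg : ((1 - 3 * (s:ℚ)) + (aF : ℚ) / 2 ^ p) < 0 := by
        rw [hsdef]; push_cast; linarith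
      have : ((1 - 3 * (s:ℚ)) + (aF : ℚ) / 2 ^ p) * 2 ^ e < 0 :=
        mul_neg_of_neg_of_pos hneg h2epos
      rw [heq] at this
      linarith
  · -- all false
    exfalso
    rw [takumVal] at hval
    rw [hall] at hval
    simp only [if_true] at hval
    rcases S with _ | _
    · simp only [Bool.false_eq_true, if_false] at hval
      have : (0:ℚ) = q := Option.some.inj hval
      linarith
    · simp at hval

lemma two_pow_ge (w : ℕ) (hw : 2 ≤ w) : w + 2 ≤ 2 ^ w := by
  induction w with
  | zero => omega
  | succ w ih =>
    rcases Nat.lt_or_ge w 2 with h | h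
    · interval_cases w
      · omega
      · norm_num
    · have := ih h
      have h2 : (2:ℕ) ^ (w+1) = 2 * 2 ^ w := by ring
      omega

/-- **Largest consecutive takum integer.**
For `n ≥ 5`, let `v` be the largest natural number with `v·2^v < 2^(n-3)`
(equivalently `v = ⌈W₀(2^(n-3)·ln 2)/ln 2 − 1⌉`), and assume `v ≤ 253`. Then
`2^v + 1` is not representable as an `n`-bit takum; hence `2^v` is the largest
consecutive integer of `n`-bit takums, i.e. the greatest `M₀` such that every
integer `m` with `|m| ≤ M₀` is representable as an `n`-bit takum. -/
theorem takum_largest_consecutive_integer (n : ℕ) (hn : 5 ≤ n) (v : ℕ)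
    (hv : v * 2 ^ v < 2 ^ (n - 3))
    (hmax : ∀ u : ℕ, u * 2 ^ u < 2 ^ (n - 3) → u ≤ v)
    (hv253 : v ≤ 253) :
    (¬ ∃ M : List Bool, M.length = n ∧ takumVal M = some (((2 ^ v + 1 : ℤ) : ℚ))) ∧
    IsGreatest {M₀ : ℤ | ∀ m : ℤ, |m| ≤ M₀ →
      ∃ M : List Bool, M.length = n ∧ takumVal M = some (m : ℚ)} (2 ^ v) := by
  have hv1 : 1 ≤ v := by
    apply hmax
    have h4 : (4:ℕ) ≤ 2 ^ (n - 3) := by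
      calc (4:ℕ) = 2 ^ 2 := by norm_num
        _ ≤ 2 ^ (n - 3) := Nat.pow_le_pow_right (by norm_num) (by omega)
    omega
  set rv := Nat.log 2 (v + 1) with hrvdef
  have hrv_le : 2 ^ rv ≤ v + 1 := Nat.pow_log_le_self 2 (by omega)
  have hrv_lt : v + 1 < 2 ^ (rv + 1) := Nat.lt_pow_succ_log_self one_lt_two _
  have hub : n ≤ v + rv + 4 := by
    have h1 : ¬ ((v + 1) * 2 ^ (v + 1) < 2 ^ (n - 3)) := fun h => by
      have := hmax (v + 1) h; omega
    push_neg at h1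
    have h2 : (v + 1) * 2 ^ (v + 1) < 2 ^ (rv + 1) * 2 ^ (v + 1) :=
      Nat.mul_lt_mul_of_lt_of_le hrv_lt (le_refl _) (by positivity)
    have h3 : 2 ^ (n - 3) < 2 ^ (rv + 1 + (v + 1)) := by
      rw [pow_add]; omega
    have h4 := (Nat.pow_lt_pow_iff_right one_lt_two).mp h3
    omega
  have hnv : v + 4 ≤ n := by
    have h0 : 2 ^ v ≤ v * 2 ^ v := Nat.le_mul_of_pos_left _ hv1
    have h1 : 2 ^ v < 2 ^ (n - 3) := lt_of_le_of_lt h0 hv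
    have := (Nat.pow_lt_pow_iff_right one_lt_two).mp h1
    omega
  have hlowv : v + Nat.log 2 v + 4 ≤ n := by
    have h0 : 2 ^ Nat.log 2 v ≤ v := Nat.pow_log_le_self 2 (by omega)
    have h1 : 2 ^ (Nat.log 2 v + v) ≤ v * 2 ^ v := by
      rw [pow_add]; exact Nat.mul_le_mul_right _ h0
    have h2 : 2 ^ (Nat.log 2 v + v) < 2 ^ (n - 3) := lt_of_le_of_lt h1 hv
    have := (Nat.pow_lt_pow_iff_right one_lt_two).mp h2
    omega
  have hnot := not_repr n v hn hv1 (by omega)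
  refine ⟨hnot, ?_, ?_⟩
  · -- membership : every |m| ≤ 2^v is representable
    intro m hm
    have hc2v : ((2 ^ v : ℕ) : ℤ) = 2 ^ v := by push_cast; ring
    rcases lt_trichotomy m 0 with hm0 | hm0 | hm0
    · -- m < 0
      set mm : ℕ := (-m).toNat with hmmdef
      have hmm1 : 1 ≤ mm := by omega
      have hmmv : mm ≤ 2 ^ v := by
        rw [abs_of_neg hm0] at hm
        omega
      have hmQ : (m : ℚ) = -(mm : ℚ) := by
        have : m = -(mm : ℤ) := by omega
        rw [this]; push_cast; ring
      rcases Nat.eq_or_lt_of_le hmm1 with h1 | h1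
      · -- mm = 1
        obtain ⟨M, hMl, hMv⟩ := repr_neg_one n hn
        exact ⟨M, hMl, by rw [hMv, hmQ, ← h1]; norm_num⟩
      · -- mm ≥ 2
        set e := Nat.log 2 (mm - 1) with hedef
        have he1 : 2 ^ e ≤ mm - 1 := Nat.pow_log_le_self 2 (by omega)
        have he2 : mm - 1 < 2 ^ (e + 1) := Nat.lt_pow_succ_log_self one_lt_two _
        have helt : e < v := by
          apply Nat.log_lt_of_lt_pow (by omega)
          omega
        have hre : Nat.log 2 (e + 1) ≤ Nat.log 2 v := Nat.log_mono_right (by omega)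
        have he5 : e + Nat.log 2 (e + 1) + 5 ≤ n := by omega
        set p := n - 5 - Nat.log 2 (e + 1) with hpdef
        have hpe : e ≤ p := by omega
        have hsplit : 2 ^ (p - e) * 2 ^ e = 2 ^ p := by
          rw [← pow_add]; congr 1; omega
        have hsplitQ : (2:ℚ) ^ (p - e) * 2 ^ e = 2 ^ p := by
          rw [← pow_add]; congr 1; omega
        have h2e1 : (2:ℕ) ^ (e + 1) = 2 * 2 ^ e := by ring
        set a := (2 ^ (e + 1) - mm) * 2 ^ (p - e) with hadef
        have hmmle : mm ≤ 2 ^ (e + 1) := by omega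
        have ha : a < 2 ^ p := by
          calc a = (2 ^ (e + 1) - mm) * 2 ^ (p - e) := rfl
            _ < 2 ^ e * 2 ^ (p - e) := by
                apply Nat.mul_lt_mul_of_lt_of_le (by omega) (le_refl _)
                  (by positivity)
            _ = 2 ^ p := by rw [← pow_add]; congr 1; omega
        obtain ⟨M, hMl, hMv⟩ := repr_neg n e a hn (by omega) (by omega) (by rw [hpdef] at ha; exact ha)
        rw [← hpdef] at hMv
        refine ⟨M, hMl, ?_⟩
        rw [hMv, hmQ]
        congr 1
        have hc1 : (a : ℚ) = ((2:ℚ) ^ (e + 1) - mm) * 2 ^ (p - e) := by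
          rw [hadef]
          push_cast [Nat.cast_sub hmmle]
          ring
        rw [hc1, ← hsplitQ]
        have h1 : (2:ℚ) ^ (p - e) ≠ 0 := by positivity
        have h2 : (2:ℚ) ^ e ≠ 0 := by positivity
        push_cast
        rw [pow_succ]
        field_simp
        ring
    · -- m = 0
      refine ⟨List.replicate n false, by simp, ?_⟩
      rw [repr_zero n (by omega), hm0]
      norm_num
    · -- m > 0
      set mm : ℕ := m.toNat with hmmdef
      have hmm1 : 1 ≤ mm := by omega
      have hmmv : mm ≤ 2 ^ v := by
        rw [abs_of_pos hm0] at hm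
        omega
      have hmQ : (m : ℚ) = (mm : ℚ) := by
        have : m = (mm : ℤ) := by omega
        rw [this]
        norm_cast
      set k := Nat.log 2 mm with hkdef
      have hk1 : 2 ^ k ≤ mm := Nat.pow_log_le_self 2 (by omega)
      have hk2 : mm < 2 ^ (k + 1) := Nat.lt_pow_succ_log_self one_lt_two _
      have hkv : k ≤ v := by
        have := Nat.log_mono_right (show mm ≤ 2 ^ v from hmmv) (b := 2)
        rwa [Nat.log_pow one_lt_two] at this
      rcases Nat.eq_or_lt_of_le hkv with hkv' | hkv'
      · -- k = v : mm = 2^v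
        have hmme : mm = 2 ^ v := by rw [← hkv'] at hmmv ⊢; omega
        by_cases hrn : rv + 5 ≤ n
        · obtain ⟨M, hMl, hMv⟩ := repr_pos n v 0 hn (by norm_num; omega) (by rw [← hrvdef]; exact hrn)
            (by positivity)
          refine ⟨M, hMl, ?_⟩
          rw [hMv, hmQ, hmme]
          push_cast
          norm_num
        · -- degenerate : n = 5, v = 1
          have hvrv : v ≤ rv := by omega
          have h2vrv : 2 ^ v ≤ 2 ^ rv := Nat.pow_le_pow_right (by norm_num) hvrv
          have hveq : v = 1 := by
            by_contra hv2
            have := two_pow_ge v (by omega)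
            omega
          have hrv1 : rv = 1 := by
            rw [hrvdef, hveq]
            simpa using Nat.log_pow one_lt_two 1
          have hn5 : n = 5 := by omega
          refine ⟨[false, true, false, false, true], by rw [hn5]; rfl, ?_⟩
          have hm2 : (m : ℚ) = 2 := by
            rw [hmQ, hmme, hveq]
            norm_num
          rw [hm2]
          norm_num [takumVal, bitsToNat]
      · -- k < v
        have hre : Nat.log 2 (k + 1) ≤ Nat.log 2 v := Nat.log_mono_right (by omega)
        have hk5 : k + Nat.log 2 (k + 1) + 5 ≤ n := by omega
        set p := n - 5 - Nat.log 2 (k + 1) with hpdef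
        have hpk : k ≤ p := by omega
        have hsplitQ : (2:ℚ) ^ (p - k) * 2 ^ k = 2 ^ p := by
          rw [← pow_add]; congr 1; omega
        set a := (mm - 2 ^ k) * 2 ^ (p - k) with hadef
        have ha : a < 2 ^ p := by
          have h2k1 : (2:ℕ) ^ (k + 1) = 2 * 2 ^ k := by ring
          calc a = (mm - 2 ^ k) * 2 ^ (p - k) := rfl
            _ < 2 ^ k * 2 ^ (p - k) := by
                apply Nat.mul_lt_mul_of_lt_of_le (by omega) (le_refl _)
                  (by positivity)
            _ = 2 ^ p := by rw [← pow_add]; congr 1; omega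
        obtain ⟨M, hMl, hMv⟩ := repr_pos n k a hn (by omega) (by omega)
          (by rw [hpdef] at ha; exact ha)
        rw [← hpdef] at hMv
        refine ⟨M, hMl, ?_⟩
        rw [hMv, hmQ]
        congr 1
        have hc1 : (a : ℚ) = ((mm : ℚ) - 2 ^ k) * 2 ^ (p - k) := by
          rw [hadef]
          push_cast [Nat.cast_sub hk1]
          ring
        rw [hc1, ← hsplitQ]
        have h1 : (2:ℚ) ^ (p - k) ≠ 0 := by positivity
        have h2 : (2:ℚ) ^ k ≠ 0 := by positivity
        field_simp
        ring
  · -- upper bound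
    intro b hb
    by_contra hcon
    push_neg at hcon
    exact hnot (hb (2 ^ v + 1) (by rw [abs_of_nonneg (by positivity)]; omega))
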